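/- Let r be a positive integer and let a, ā be integers with (a−1)(ā−1) ≡ 1 (mod r). Set u := (0,1), v := (r, 1−a), w := gcd(r,a), ℓ := r/w and δ := (ℓ, −a/w). Then w divides ā, and for every integer j ≥ 0 there exists M ∈ GL(2,ℤ) with M·(v − jℓδ) = (0,1) and M·(v − (j+1)ℓδ) = (ℓ², 1 − ℓ·(ā/w)). That is, each subcone spanned by consecutive points v − (j+1)ℓδ and v − jℓδ, read from the ray through v, has singularity type 1/ℓ²(1, ℓā/w − 1). -/

import Mathlib

/-- In the normalized setting `u = (0,1)`, `v = (r, 1-a)`,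
`w = gcd(r,a)`, `ℓ = r/w`, `δ = (ℓ, -a/w)`, with `(a-1)(ā-1) ≡ 1 (mod r)`:
`w` divides `ā`, and each subcone spanned by the consecutive points `v - (j+1)ℓδ`
and `v - jℓδ` (for `j ≥ 0`), read from the ray through `v`, has singularity type
`1/ℓ²(1, ℓā/w - 1)`. -/
theorem stmt_5 (r a abar : ℤ) (hr : 0 < r)
    (h : (a - 1) * (abar - 1) ≡ 1 [ZMOD r])
    (w l : ℤ) (hw : w = Int.gcd r a) (hl : l = r / w) :
    w ∣ abar ∧
    ∀ j : ℤ, 0 ≤ j →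
      ∃ M : Matrix (Fin 2) (Fin 2) ℤ, (M.det = 1 ∨ M.det = -1) ∧
        M.mulVec ![r - j * l * l, (1 - a) + j * l * (a / w)] = ![0, 1] ∧
        M.mulVec ![r - (j + 1) * l * l, (1 - a) + (j + 1) * l * (a / w)] =
          ![l * l, 1 - l * (abar / w)] := by
  have hw0 : 0 < w := by
    rw [hw]
    exact_mod_cast Int.gcd_pos_of_ne_zero_left a hr.ne'
  have hwr : w ∣ r := hw ▸ Int.gcd_dvd_left r a
  have hwa : w ∣ a := hw ▸ Int.gcd_dvd_right r a
  have hrl : r = w * l := by rw [hl, Int.mul_ediv_cancel' hwr]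
  -- r ∣ a*abar - a - abar
  have hdvd : r ∣ a * abar - a - abar := by
    have h1 := h.symm.dvd
    have e : (a - 1) * (abar - 1) - 1 = a * abar - a - abar := by ring
    rwa [e] at h1
  have hwabar : w ∣ abar := by
    have h1 : w ∣ a * abar - a - abar := dvd_trans hwr hdvd
    have h2 : w ∣ a * abar := Dvd.dvd.mul_right hwa abar
    have e : abar = a * abar - (a * abar - a - abar) - a := by ring
    rw [e]
    exact dvd_sub (dvd_sub h2 h1) hwa
  refine ⟨hwabar, ?_⟩
  set α := a / w with hα
  set β := abar / w with hβ
  have ha : a = w * α := (Int.mul_ediv_cancel' hwa).symm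
  have hb : abar = w * β := (Int.mul_ediv_cancel' hwabar).symm
  -- l ∣ w*α*β - α - β
  have hkey : l ∣ w * α * β - α - β := by
    have h3 : w * l ∣ w * (w * α * β - α - β) := by
      rw [← hrl]
      have e : w * (w * α * β - α - β) = a * abar - a - abar := by
        rw [ha, hb]; ring
      rwa [e]
    exact (mul_dvd_mul_iff_left hw0.ne').mp h3
  intro j _
  set t : ℤ := w - j * l with ht
  have hls : l ∣ α + β - α * β * t := by
    have e : α + β - α * β * t = -(w * α * β - α - β) + α * β * j * l := by
      rw [ht]; ring
    rw [e]
    exact dvd_add (dvd_neg.mpr hkey) ⟨α * β * j, by ring⟩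
  obtain ⟨s, hs⟩ := hls
  refine ⟨!![α * t - 1, t * l; s, 1 - t * β], ?_, ?_, ?_⟩
  · right
    rw [Matrix.det_fin_two_of]
    linear_combination t * hs
  · funext i
    fin_cases i
    · simp [Matrix.mulVec, dotProduct, Fin.sum_univ_two, hrl, ha, Fin.mk_zero, Fin.mk_one]
      ring
    · simp [Matrix.mulVec, dotProduct, Fin.sum_univ_two, hrl, ha, Fin.mk_zero, Fin.mk_one]
      linear_combination (-t) * hs
  · funext i
    fin_cases i
    · simp [Matrix.mulVec, dotProduct, Fin.sum_univ_two, hrl, ha, hb, Fin.mk_zero, Fin.mk_one]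
      ring
    · simp [Matrix.mulVec, dotProduct, Fin.sum_univ_two, hrl, ha, hb, Fin.mk_zero, Fin.mk_one]
      linear_combination (l - t) * hs
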